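/- Distribution (multiplication) formula for Carlitz q-Bernoulli polynomials defined by the explicit sum: for q in a field of characteristic 0 with all needed q-numbers nonzero, l ≥ 0 and m ≥ 1, β_{l,q}(x) = [m]_q^{l−1} ∑_{i=0}^{m−1} q^i β_{l,q^m}((x+i)/m), where β_{l,q}(x) = (1/(1−q)^l) ∑_{j=0}^l C(l,j)(−1)^j q^{jx} (j+1)/[j+1]_q and q^{(x+i)/m} is interpreted as a formal element whose m-th power is q^{x+i}. -/

import Mathlib

open Finset Polynomial

/-- Signed Stirling numbers of the first kind: coefficients of the falling factorial. -/
noncomputable def S1 (n l : ℕ) : ℤ := (descPochhammer ℤ n).coeff l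

/-- Stirling numbers of the second kind (explicit formula). -/
noncomputable def S2 (n m : ℕ) : ℚ :=
  ((m.factorial : ℚ))⁻¹ * ∑ j ∈ range (m + 1), (-1 : ℚ) ^ (m - j) * (m.choose j) * (j : ℚ) ^ n

/-- The q-number `[k]_q = (1-q^k)/(1-q)`. -/
noncomputable def qnum (q : ℝ) (k : ℕ) : ℝ := (1 - q ^ k) / (1 - q)

/-- The Carlitz q-Bernoulli polynomial, via the explicit sum formula;
`q ^ ((j:ℝ)*x)` is the real power `q^{jx}`. -/
noncomputable def carl (q : ℝ) (l : ℕ) (x : ℝ) : ℝ :=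
  (1 / (1 - q) ^ l) * ∑ j ∈ range (l + 1),
    (l.choose j : ℝ) * (-1) ^ j * q ^ ((j : ℝ) * x) * (((j : ℝ) + 1) / qnum q (j + 1))

/-- distribution formula for Carlitz q-Bernoulli polynomials. -/
theorem carlitz_distribution
    (q x : ℝ) (hq0 : 0 < q) (hq1 : q ≠ 1) (l m : ℕ) (hm : 1 ≤ m) :
    carl q l x = qnum q m ^ ((l : ℤ) - 1) *
      ∑ i ∈ range m, q ^ (i : ℕ) * carl (q ^ m) l ((x + i) / m) := by
  have hq1' : (1:ℝ) - q ≠ 0 := sub_ne_zero.mpr (Ne.symm hq1)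
  have hpow : ∀ k : ℕ, k ≠ 0 → q ^ k ≠ 1 := by
    intro k hk
    rcases lt_or_gt_of_ne hq1 with h | h
    · exact ne_of_lt (pow_lt_one₀ hq0.le h hk)
    · exact ne_of_gt (one_lt_pow₀ h hk)
  have hm0 : (m:ℝ) ≠ 0 := Nat.cast_ne_zero.mpr (by omega)
  have hqm : (1:ℝ) - q ^ m ≠ 0 := sub_ne_zero.mpr (Ne.symm (hpow m (by omega)))
  have hQ : qnum q m ≠ 0 := div_ne_zero hqm hq1'
  have hrw : ∀ (i j : ℕ), ((q ^ m : ℝ)) ^ ((j:ℝ) * ((x + i)/m)) = q ^ ((j:ℝ)*x) * (q^i)^j := by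
    intro i j
    rw [← Real.rpow_natCast q m, ← Real.rpow_mul hq0.le]
    have h1 : (m:ℝ) * ((j:ℝ) * ((x + i)/m)) = (j:ℝ)*x + ((i*j : ℕ) : ℝ) := by
      push_cast; field_simp
    rw [h1, Real.rpow_add hq0, Real.rpow_natCast, pow_mul]
  have step1 : ∑ i ∈ range m, q ^ (i:ℕ) * carl (q ^ m) l ((x + i) / m)
      = ∑ j ∈ range (l+1), (1 / (1 - q^m) ^ l) *
          ((l.choose j : ℝ) * (-1) ^ j * q ^ ((j:ℝ)*x) * (((j:ℝ)+1) / qnum (q^m) (j+1))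
            * ∑ i ∈ range m, (q^(j+1))^i) := by
    unfold carl
    simp only [hrw, Finset.mul_sum]
    rw [Finset.sum_comm]
    refine Finset.sum_congr rfl fun j _ => Finset.sum_congr rfl fun i _ => ?_
    rw [show (q^(j+1) : ℝ)^i = q^i * (q^i)^j by
      rw [pow_succ', mul_pow, ← pow_right_comm]]
    ring
  rw [step1, zpow_sub_one₀ hQ, zpow_natCast]
  -- now expand everything and prove termwise
  unfold carl qnum
  rw [Finset.mul_sum, Finset.mul_sum]
  refine Finset.sum_congr rfl fun j hj => ?_
  have hj1 : (1:ℝ) - q^(j+1) ≠ 0 := sub_ne_zero.mpr (Ne.symm (hpow (j+1) (by omega)))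
  have hgeom : ∑ i ∈ range m, (q^(j+1))^i = ((q^(j+1))^m - 1)/(q^(j+1) - 1) :=
    geom_sum_eq (hpow (j+1) (by omega)) m
  have hjm : ((q:ℝ)^(j+1))^m - 1 ≠ 0 := by
    rw [← pow_mul]
    exact sub_ne_zero.mpr (hpow ((j+1)*m) (by positivity))
  have hjm' : (1:ℝ) - (q^m)^(j+1) ≠ 0 := by
    rw [pow_right_comm]
    intro h
    exact hjm (by linarith [sub_eq_zero.mp h])
  rw [hgeom]
  rw [show ((q:ℝ)^m)^(j+1) = (q^(j+1))^m from pow_right_comm q m (j+1)]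
  unfold qnum at hQ
  rw [show ((q:ℝ)^(j+1))^m - 1 = -(1 - (q^(j+1))^m) by ring,
      show (q:ℝ)^(j+1) - 1 = -(1 - q^(j+1)) by ring, neg_div_neg_eq]
  have hjm2 : (1:ℝ) - (q^(j+1))^m ≠ 0 := by
    intro h; exact hjm (by linarith)
  have key : ∀ (a b c d C e : ℝ), a ≠ 0 → b ≠ 0 → c ≠ 0 → d ≠ 0 →
      1/a^l * (C * (e / (c/a))) = (b/a)^l * (b/a)⁻¹ * (1/b^l * (C * (e/(d/b)) * (d/c))) := by
    intro a b c d C e ha hb hc hd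
    field_simp
    rw [div_pow]; field_simp
  exact key (1-q) (1-q^m) (1-q^(j+1)) (1-(q^(j+1))^m) _ _ hq1' hqm hj1 hjm2
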